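/- Let v_0, ..., v_{n-1} be affinely independent points in ℝ^{n-1} in canonical position (v_j has zero coordinates of index ≥ j and positive (j-1)-st coordinate for j ≥ 1). Then the canonical-position coordinates are uniquely determined by the pairwise distances d_{i,j} = ‖v_i − v_j‖ via the recursion: for k < j−1, v_{j,k} = (d_{j,0}² − d_{j,k+1}² + v_{k+1,k}² + Σ_{p=0}^{k−1}(v_{k+1,p}² − 2 v_{j,p} v_{k+1,p})) / (2 v_{k+1,k}), and v_{j,j−1} = sqrt(d_{j,0}² − Σ_{p=0}^{j−2} v_{j,p}²). -/

import Mathlib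

open Finset in
/-- For affinely independent points in canonical position in `ℝ^{n-1}`, the canonical
coordinates are determined from the pairwise distances by the recursion of the paper:
for `k < j - 1`,
`v_{j,k} = (d_{j,0}² − d_{j,k+1}² + v_{k+1,k}² + Σ_{p<k}(v_{k+1,p}² − 2 v_{j,p} v_{k+1,p})) / (2 v_{k+1,k})`,
and `v_{j,j−1} = sqrt(d_{j,0}² − Σ_{p<j−1} v_{j,p}²)`. -/
theorem canonical_coordinates_recursion (n : ℕ) (hn : 2 ≤ n)
    (v : Fin n → EuclideanSpace ℝ (Fin (n - 1)))
    (hv : AffineIndependent ℝ v)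
    (c : Fin n → ℕ → ℝ)
    (hc : ∀ (j : Fin n) (k : ℕ) (h : k < n - 1), c j k = v j ⟨k, h⟩)
    (hczero : ∀ (j : Fin n) (k : ℕ), n - 1 ≤ k → c j k = 0)
    (h0 : v ⟨0, by omega⟩ = 0)
    (hcanon : ∀ (j : Fin n) (k : ℕ), (j : ℕ) ≤ k → c j k = 0)
    (hpos : ∀ j : Fin n, 1 ≤ (j : ℕ) → 0 < c j ((j : ℕ) - 1)) :
    (∀ (j : Fin n) (k : ℕ) (hk : k + 1 < (j : ℕ)),
      c j k = (dist (v j) (v ⟨0, by omega⟩) ^ 2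
          - dist (v j) (v ⟨k + 1, by omega⟩) ^ 2
          + c ⟨k + 1, by omega⟩ k ^ 2
          + ∑ p ∈ range k, (c ⟨k + 1, by omega⟩ p ^ 2 - 2 * c j p * c ⟨k + 1, by omega⟩ p))
        / (2 * c ⟨k + 1, by omega⟩ k)) ∧
    (∀ j : Fin n, 1 ≤ (j : ℕ) →
      c j ((j : ℕ) - 1) =
        Real.sqrt (dist (v j) (v ⟨0, by omega⟩) ^ 2 - ∑ p ∈ range ((j : ℕ) - 1), c j p ^ 2)) := by
  -- distance in terms of coordinates
  have hdist : ∀ a b : Fin n, dist (v a) (v b) ^ 2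
      = ∑ i ∈ range (n - 1), (c a i - c b i) ^ 2 := by
    intro a b
    rw [EuclideanSpace.dist_eq, Real.sq_sqrt (by positivity)]
    rw [← Fin.sum_univ_eq_sum_range (fun i => (c a i - c b i) ^ 2) (n - 1)]
    refine Finset.sum_congr rfl fun i _ => ?_
    rw [Real.dist_eq, sq_abs, hc a i i.isLt, hc b i i.isLt]
  have hc0 : ∀ k : ℕ, c ⟨0, by omega⟩ k = 0 := fun k => hcanon _ k (Nat.zero_le k)
  -- distance to origin
  have hd0 : ∀ a : Fin n, dist (v a) (v ⟨0, by omega⟩) ^ 2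
      = ∑ i ∈ range (n - 1), c a i ^ 2 := by
    intro a
    rw [hdist]
    refine Finset.sum_congr rfl fun i _ => by rw [hc0]; ring
  constructor
  · intro j k hk
    have hkn : k + 1 < n - 1 := by have := j.isLt; omega
    set w : Fin n := ⟨k + 1, by omega⟩ with hw
    have hwz : ∀ i : ℕ, k + 1 ≤ i → c w i = 0 := fun i hi => hcanon w i hi
    have hAB : dist (v j) (v ⟨0, by omega⟩) ^ 2 - dist (v j) (v w) ^ 2
        = ∑ i ∈ range (k + 1), (2 * c j i * c w i - c w i ^ 2) := by
      rw [hd0, hdist, ← Finset.sum_sub_distrib]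
      rw [← Finset.sum_subset (Finset.range_subset_range.2 (by omega : k + 1 ≤ n - 1))
        (fun i _ hi => by
          rw [hwz i (by simpa using hi)]; ring)]
      exact Finset.sum_congr rfl fun i _ => by ring
    have hck : 0 < c w k := by
      have := hpos w (by simp [hw])
      simpa [hw] using this
    rw [hAB, Finset.sum_range_succ]
    have hsum : ∑ p ∈ range k, (2 * c j p * c w p - c w p ^ 2)
        + ∑ p ∈ range k, (c w p ^ 2 - 2 * c j p * c w p) = 0 := by
      rw [← Finset.sum_add_distrib]
      exact Finset.sum_eq_zero fun p _ => by ring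
    rw [eq_div_iff (by positivity)]
    linarith [hsum]
  · intro j hj
    have hjn : (j : ℕ) ≤ n - 1 := by have := j.isLt; omega
    have h1 : dist (v j) (v ⟨0, by omega⟩) ^ 2 = ∑ i ∈ range ((j : ℕ)), c j i ^ 2 := by
      rw [hd0]
      exact (Finset.sum_subset (Finset.range_subset_range.2 hjn)
        (fun i _ hi => by rw [hcanon j i (by simpa using hi)]; ring)).symm
    have h2 : (j : ℕ) = ((j : ℕ) - 1) + 1 := by omega
    rw [h1, h2, Finset.sum_range_succ]
    simp only [Nat.add_sub_cancel]
    have := hpos j hj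
    rw [add_sub_cancel_left, Real.sqrt_sq this.le]
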